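/- For every z in the upper half plane, the absolute value of the infinite product ∏_{n=1}^∞ (1 - e^{2πinz}) is at most Σ_{n∈ℤ} e^{-π Im(z)(3n²-n)}. -/

import Mathlib

open Complex Real


open Finset

namespace PentAux

/-- Staircase finsets: for `n > 0`, parts `n..2n-1` (sum `n(3n-1)/2`);
for `n ≤ 0` with `k = |n|`, parts `k+1..2k` (sum `k(3k+1)/2`); `pent 0 = ∅`. -/
def pent (n : ℤ) : Finset ℕ :=
  if 0 < n then Icc n.toNat (2 * n.toNat - 1) else Icc (n.natAbs + 1) (2 * n.natAbs)

lemma pent_shape (n : ℤ) :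
    ∃ c, 1 ≤ c ∧ (pent n = Icc c (2 * c - 1) ∨ pent n = Icc c (2 * c - 2)) := by
  unfold pent
  split
  · exact ⟨n.toNat, by omega, Or.inl rfl⟩
  · refine ⟨n.natAbs + 1, by omega, Or.inr ?_⟩
    have h2 : 2 * (n.natAbs + 1) - 2 = 2 * n.natAbs := by omega
    rw [h2]

lemma pent_injective : Function.Injective pent := by
  intro a b hab
  unfold pent at hab
  rw [Finset.ext_iff] at hab
  have h1 := hab a.toNat
  have h2 := hab b.toNat
  have h3 := hab (a.natAbs + 1)
  have h4 := hab (b.natAbs + 1)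
  have h5 := hab (2 * a.toNat - 1)
  have h6 := hab (2 * b.toNat - 1)
  have h7 := hab (2 * a.natAbs)
  have h8 := hab (2 * b.natAbs)
  split_ifs at h1 h2 h3 h4 h5 h6 h7 h8 <;> simp only [mem_Icc] at * <;> omega

lemma sum_Icc_shift (a b : ℕ) (hab : a ≤ b) :
    (∑ x ∈ Icc (a + 1) (b + 1), x) = (∑ x ∈ Icc a b, x) + (b + 1 - a) := by
  have h : Icc (a + 1) (b + 1) = (Icc a b).image (fun x => x + 1) := by
    rw [Finset.image_add_right_Icc]
  rw [h, Finset.sum_image (by intro x _ y _ h; simp only at h; omega)]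
  rw [Finset.sum_add_distrib, Finset.sum_const, Nat.card_Icc, smul_eq_mul, mul_one]

/-- start of the maximal run of consecutive elements at the top of `S` -/
def runStart (S : Finset ℕ) (h : S.Nonempty) : ℕ :=
  (S.filter fun x => Icc x (S.max' h) ⊆ S).min' ⟨S.max' h, by
    simp only [mem_filter, Finset.Icc_self, Finset.singleton_subset_iff]
    exact ⟨S.max'_mem h, S.max'_mem h⟩⟩

lemma filter_run_nonempty (S : Finset ℕ) (h : S.Nonempty) :
    (S.filter fun x => Icc x (S.max' h) ⊆ S).Nonempty := by
  refine ⟨S.max' h, ?_⟩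
  simp only [mem_filter, Finset.Icc_self, Finset.singleton_subset_iff]
  exact ⟨S.max'_mem h, S.max'_mem h⟩

lemma runStart_spec (S : Finset ℕ) (h : S.Nonempty) :
    runStart S h ∈ S ∧ Icc (runStart S h) (S.max' h) ⊆ S := by
  have := Finset.min'_mem (S.filter fun x => Icc x (S.max' h) ⊆ S)
    (filter_run_nonempty S h)
  rw [mem_filter] at this
  exact this

lemma runStart_pred (S : Finset ℕ) (h : S.Nonempty) (h1 : 1 ≤ runStart S h) :
    runStart S h - 1 ∉ S := by
  intro hmem
  have hsub : Icc (runStart S h - 1) (S.max' h) ⊆ S := by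
    intro x hx
    rw [mem_Icc] at hx
    rcases eq_or_ne x (runStart S h - 1) with rfl | hne
    · exact hmem
    · exact (runStart_spec S h).2 (by rw [mem_Icc]; omega)
  have hm : runStart S h - 1 ∈ S.filter fun x => Icc x (S.max' h) ⊆ S :=
    mem_filter.2 ⟨hmem, hsub⟩
  have h2 : runStart S h ≤ runStart S h - 1 := Finset.min'_le _ _ hm
  omega

lemma min'_le_runStart (S : Finset ℕ) (h : S.Nonempty) : S.min' h ≤ runStart S h :=
  Finset.min'_le _ _ (runStart_spec S h).1

lemma runStart_le_max' (S : Finset ℕ) (h : S.Nonempty) : runStart S h ≤ S.max' h :=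
  Finset.le_max' _ _ (runStart_spec S h).1

/-- Franklin's involution -/
def iota (S : Finset ℕ) : Finset ℕ :=
  if h : S.Nonempty then
    if S.min' h ≤ S.max' h - runStart S h + 1 then
      (S \ insert (S.min' h) (Icc (S.max' h - S.min' h + 1) (S.max' h))) ∪
        Icc (S.max' h - S.min' h + 2) (S.max' h + 1)
    else
      (S \ Icc (runStart S h) (S.max' h)) ∪
        insert (S.max' h - runStart S h + 1) (Icc (runStart S h - 1) (S.max' h - 1))
  else ∅

end PentAux

namespace PentAux
open Finset

lemma runStart_le_of_mem (S : Finset ℕ) (h : S.Nonempty) {x : ℕ} (hx : x ∈ S)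
    (hsub : Icc x (S.max' h) ⊆ S) : runStart S h ≤ x := by
  unfold runStart
  exact Finset.min'_le _ _ (mem_filter.2 ⟨hx, hsub⟩)

lemma caseA (S : Finset ℕ) (h : S.Nonempty) (h0 : 0 ∉ S) (hp : ∀ n, S ≠ pent n)
    (hc : S.min' h ≤ S.max' h - runStart S h + 1) :
    (iota S).Nonempty ∧ 0 ∉ iota S ∧ (∀ n, iota S ≠ pent n) ∧
      (iota S).sum id = S.sum id ∧ S.card = (iota S).card + 1 ∧ iota (iota S) = S := by
  set M := S.max' h with hM
  set s := S.min' h with hs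
  set a := runStart S h with ha
  have haS : a ∈ S := (runStart_spec S h).1
  have hrun : Icc a M ⊆ S := (runStart_spec S h).2
  have hsa : s ≤ a := min'_le_runStart S h
  have haM : a ≤ M := runStart_le_max' S h
  have hsS : s ∈ S := S.min'_mem h
  have hs1 : 1 ≤ s := Nat.one_le_iff_ne_zero.2 (fun e => h0 (e ▸ hsS))
  have hmin : ∀ x ∈ S, s ≤ x := fun x hx => S.min'_le x hx
  have hmax : ∀ x ∈ S, x ≤ M := fun x hx => S.le_max' x hx
  -- M ≥ 2s, otherwise S is the pentagonal staircase Icc s (2s-1)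
  have hM2s : 2 * s ≤ M := by
    by_contra hlt
    push_neg at hlt
    have ha_eq : a = s := by omega
    have hMeq : M = 2 * s - 1 := by omega
    apply hp (s : ℤ)
    have hpe : pent (s : ℤ) = Icc s (2 * s - 1) := by
      have h1 : (0 : ℤ) < (s : ℤ) := by exact_mod_cast hs1
      simp only [pent, if_pos h1, Int.toNat_natCast]
    rw [hpe]
    apply Finset.Subset.antisymm
    · intro x hx
      rw [mem_Icc]
      have := hmin x hx; have := hmax x hx; omega
    · intro x hx
      apply hrun
      rw [mem_Icc] at hx ⊢
      omega
  have hI1S : Icc (M - s + 1) M ⊆ S := by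
    intro x hx
    apply hrun
    rw [mem_Icc] at hx ⊢
    omega
  have hsI1 : s ∉ Icc (M - s + 1) M := by rw [mem_Icc]; omega
  have hJS : insert s (Icc (M - s + 1) M) ⊆ S := by
    intro x hx
    rcases mem_insert.1 hx with rfl | hx
    · exact hsS
    · exact hI1S hx
  have hXdef : iota S = (S \ insert s (Icc (M - s + 1) M)) ∪ Icc (M - s + 2) (M + 1) := by
    unfold iota
    rw [dif_pos h, if_pos hc]
  set X := (S \ insert s (Icc (M - s + 1) M)) ∪ Icc (M - s + 2) (M + 1) with hXd
  have hmemX : ∀ x, x ∈ X ↔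
      ((x ∈ S ∧ x ≠ s ∧ ¬(M - s + 1 ≤ x ∧ x ≤ M)) ∨ (M - s + 2 ≤ x ∧ x ≤ M + 1)) := by
    intro x
    simp only [hXd, mem_union, mem_sdiff, mem_insert, mem_Icc]
    tauto
  have hMp1X : M + 1 ∈ X := by rw [hmemX]; right; omega
  have hXne : X.Nonempty := ⟨M + 1, hMp1X⟩
  have h0X : 0 ∉ X := by
    rw [hmemX]
    rintro (⟨h1, _, _⟩ | ⟨h1, _⟩)
    · exact h0 h1
    · omega
  have hdisj : Disjoint (S \ insert s (Icc (M - s + 1) M)) (Icc (M - s + 2) (M + 1)) := by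
    rw [Finset.disjoint_left]
    intro x hx hx2
    rw [mem_sdiff, mem_insert, mem_Icc] at hx
    rw [mem_Icc] at hx2
    have := hmax x hx.1
    push_neg at hx
    omega
  -- sum
  have hsum1 : (S \ insert s (Icc (M - s + 1) M)).sum id + (insert s (Icc (M - s + 1) M)).sum id
      = S.sum id := Finset.sum_sdiff hJS
  have hsum2 : X.sum id = (S \ insert s (Icc (M - s + 1) M)).sum id
      + (Icc (M - s + 2) (M + 1)).sum id := Finset.sum_union hdisj
  have hsumJ : (insert s (Icc (M - s + 1) M)).sum id = s + (Icc (M - s + 1) M).sum id :=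
    Finset.sum_insert hsI1
  have hshift : (Icc (M - s + 2) (M + 1)).sum id = (Icc (M - s + 1) M).sum id + s := by
    have h1 : M - s + 1 ≤ M := by omega
    have h2 := sum_Icc_shift (M - s + 1) M h1
    have h3 : M - s + 1 + 1 = M - s + 2 := by omega
    rw [h3] at h2
    simp only [id] at h2 ⊢
    omega
  have hsumX : X.sum id = S.sum id := by omega
  -- card
  have hcard1 : (S \ insert s (Icc (M - s + 1) M)).card
      = S.card - (insert s (Icc (M - s + 1) M)).card := card_sdiff_of_subset hJS
  have hcardJle : (insert s (Icc (M - s + 1) M)).card ≤ S.card := card_le_card hJS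
  have hcard2 : X.card = (S \ insert s (Icc (M - s + 1) M)).card
      + (Icc (M - s + 2) (M + 1)).card := card_union_of_disjoint hdisj
  have hcardJ : (insert s (Icc (M - s + 1) M)).card = (Icc (M - s + 1) M).card + 1 :=
    card_insert_of_notMem hsI1
  have hcardI1 : (Icc (M - s + 1) M).card = s := by rw [Nat.card_Icc]; omega
  have hcardI2 : (Icc (M - s + 2) (M + 1)).card = s := by rw [Nat.card_Icc]; omega
  have hcardX : S.card = X.card + 1 := by omega
  -- data of X
  have hXub : ∀ x ∈ X, x ≤ M + 1 := by
    intro x hx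
    rw [hmemX] at hx
    rcases hx with ⟨h1, _, _⟩ | ⟨_, h2⟩
    · have := hmax x h1; omega
    · omega
  have hXlb : ∀ x ∈ X, s + 1 ≤ x := by
    intro x hx
    rw [hmemX] at hx
    rcases hx with ⟨h1, h2, _⟩ | ⟨h1, _⟩
    · have := hmin x h1; omega
    · omega
  have hM' : X.max' hXne = M + 1 :=
    le_antisymm (Finset.max'_le _ _ _ hXub) (Finset.le_max' _ _ hMp1X)
  have hMs1X : M - s + 1 ∉ X := by
    rw [hmemX]
    rintro (⟨_, _, h3⟩ | ⟨h1, _⟩)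
    · exact h3 ⟨le_refl _, by omega⟩
    · omega
  have hrsX : runStart X hXne = M - s + 2 := by
    have hXrs := runStart_spec X hXne
    rw [hM'] at hXrs
    apply le_antisymm
    · apply runStart_le_of_mem X hXne
      · rw [hmemX]; right; omega
      · rw [hM']
        intro x hx
        rw [mem_Icc] at hx
        rw [hmemX]
        right; omega
    · by_contra hlt
      push_neg at hlt
      apply hMs1X
      apply hXrs.2
      rw [mem_Icc]
      have h1 := hXlb _ hXrs.1
      omega
  have hbranchX : ¬ (X.min' hXne ≤ X.max' hXne - runStart X hXne + 1) := by
    rw [hM', hrsX]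
    have h1 := hXlb _ (X.min'_mem hXne)
    omega
  have hiotaX : iota X = (X \ Icc (M - s + 2) (M + 1)) ∪ insert s (Icc (M - s + 1) M) := by
    unfold iota
    rw [dif_pos hXne, if_neg hbranchX, hM', hrsX]
    have e1 : M + 1 - (M - s + 2) + 1 = s := by omega
    have e2 : M - s + 2 - 1 = M - s + 1 := by omega
    have e3 : M + 1 - 1 = M := by omega
    rw [e1, e2, e3]
  have hXdiff : X \ Icc (M - s + 2) (M + 1) = S \ insert s (Icc (M - s + 1) M) := by
    apply Finset.Subset.antisymm
    · intro x hx
      rw [mem_sdiff] at hx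
      rcases mem_union.1 hx.1 with h1 | h1
      · exact h1
      · exact absurd h1 hx.2
    · intro x hx
      rw [mem_sdiff]
      refine ⟨mem_union_left _ hx, fun h2 => ?_⟩
      exact Finset.disjoint_left.1 hdisj hx h2
  have hiotaXS : iota X = S := by
    rw [hiotaX, hXdiff, Finset.sdiff_union_of_subset hJS]
  -- not pentagonal
  have hpX : ∀ n, X ≠ pent n := by
    intro n hXp
    obtain ⟨c, hc1, hshp⟩ := pent_shape n
    have hXI : ∃ d, X = Icc c d ∧ (d = 2 * c - 1 ∨ d = 2 * c - 2) := by
      rcases hshp with hshp | hshp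
      · exact ⟨2 * c - 1, hXp.trans hshp, Or.inl rfl⟩
      · exact ⟨2 * c - 2, hXp.trans hshp, Or.inr rfl⟩
    obtain ⟨d, hXI, hd⟩ := hXI
    rcases Finset.eq_empty_or_nonempty (S \ insert s (Icc (M - s + 1) M)) with hemp | ⟨x, hx⟩
    · have hXeq : X = Icc (M - s + 2) (M + 1) := by
        rw [hXd, hemp, Finset.empty_union]
      have hIcc := hXeq.symm.trans hXI
      rw [Finset.ext_iff] at hIcc
      have e1 := hIcc (M - s + 2)
      have e2 := hIcc (M + 1)
      have e3 := hIcc c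
      have e4 := hIcc d
      simp only [mem_Icc] at e1 e2 e3 e4
      omega
    · have hxX : x ∈ X := mem_union_left _ hx
      have hxle : x ≤ M - s := by
        rw [mem_sdiff, mem_insert, mem_Icc] at hx
        have h1 := hmax x hx.1
        have h2 : ¬(x = s ∨ (M - s + 1 ≤ x ∧ x ≤ M)) := hx.2
        omega
      rw [Finset.ext_iff] at hXI
      have e1 := hXI x
      have e2 := hXI (M + 1)
      have e3 := hXI (M - s + 1)
      simp only [mem_Icc] at e1 e2 e3
      have f1 := e1.1 hxX
      have f2 := e2.1 hMp1X
      have f3 : ¬(c ≤ M - s + 1 ∧ M - s + 1 ≤ d) := fun hcc => hMs1X (e3.2 hcc)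
      have h2 := hmin x (mem_sdiff.1 hx).1
      omega
  exact ⟨hXdef ▸ hXne, hXdef ▸ h0X, hXdef ▸ hpX, hXdef ▸ hsumX, hXdef ▸ hcardX,
    by rw [hXdef]; exact hiotaXS⟩

end PentAux

namespace PentAux
open Finset

lemma caseB (S : Finset ℕ) (h : S.Nonempty) (h0 : 0 ∉ S) (hp : ∀ n, S ≠ pent n)
    (hc : ¬ (S.min' h ≤ S.max' h - runStart S h + 1)) :
    (iota S).Nonempty ∧ 0 ∉ iota S ∧ (∀ n, iota S ≠ pent n) ∧
      (iota S).sum id = S.sum id ∧ (iota S).card = S.card + 1 ∧ iota (iota S) = S := by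
  set M := S.max' h with hM
  set s := S.min' h with hs
  set a := runStart S h with ha
  have haS : a ∈ S := (runStart_spec S h).1
  have hrun : Icc a M ⊆ S := (runStart_spec S h).2
  have hsa : s ≤ a := min'_le_runStart S h
  have haM : a ≤ M := runStart_le_max' S h
  have hsS : s ∈ S := S.min'_mem h
  have hs1 : 1 ≤ s := Nat.one_le_iff_ne_zero.2 (fun e => h0 (e ▸ hsS))
  have hmin : ∀ x ∈ S, s ≤ x := fun x hx => S.min'_le x hx
  have hmax : ∀ x ∈ S, x ≤ M := fun x hx => S.le_max' x hx
  have hs2 : 2 ≤ s := by omega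
  have ha2 : 2 ≤ a := by omega
  have hpred : a - 1 ∉ S := runStart_pred S h (by omega)
  -- key bound M + 3 ≤ 2a, otherwise S is the staircase Icc a (2a-2)
  have hKey : M + 3 ≤ 2 * a := by
    by_contra hlt
    push_neg at hlt
    by_cases hlow : ∃ x ∈ S, x + 2 ≤ a
    · obtain ⟨x, hxS, hxa⟩ := hlow
      have := hmin x hxS
      omega
    · push_neg at hlow
      have hSeq : S = Icc a M := by
        apply Finset.Subset.antisymm
        · intro x hx
          rw [mem_Icc]
          have h1 := hlow x hx
          have h2 := hmax x hx
          have h3 : x ≠ a - 1 := fun e => hpred (e ▸ hx)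
          omega
        · exact hrun
      have hsEq : s = a := by
        have : s ∈ Icc a M := hSeq ▸ hsS
        rw [mem_Icc] at this
        omega
      have hMeq : M = 2 * a - 2 := by omega
      apply hp (1 - (a : ℤ))
      have hpe : pent (1 - (a : ℤ)) = Icc a (2 * a - 2) := by
        simp only [pent, if_neg (by omega : ¬(0 : ℤ) < 1 - (a : ℤ))]
        have h2 : (1 - (a : ℤ)).natAbs = a - 1 := by omega
        rw [h2]
        have e1 : a - 1 + 1 = a := by omega
        have e2 : 2 * (a - 1) = 2 * a - 2 := by omega
        rw [e1, e2]
      rw [hpe, ← hMeq]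
      exact hSeq
  have hsd : ∀ x ∈ S, x ∉ Icc a M → s ≤ x ∧ x ≤ a - 2 := by
    intro x hx hx2
    rw [mem_Icc] at hx2
    have h1 := hmin x hx
    have h2 := hmax x hx
    have h3 : x ≠ a - 1 := fun e => hpred (e ▸ hx)
    omega
  have hXdef : iota S = (S \ Icc a M) ∪ insert (M - a + 1) (Icc (a - 1) (M - 1)) := by
    unfold iota
    rw [dif_pos h, if_neg hc]
  set X := (S \ Icc a M) ∪ insert (M - a + 1) (Icc (a - 1) (M - 1)) with hXd
  have hmemX : ∀ x, x ∈ X ↔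
      ((x ∈ S ∧ ¬(a ≤ x ∧ x ≤ M)) ∨ (x = M - a + 1 ∨ (a - 1 ≤ x ∧ x ≤ M - 1))) := by
    intro x
    simp only [hXd, mem_union, mem_sdiff, mem_insert, mem_Icc]
  have hσX : M - a + 1 ∈ X := by rw [hmemX]; right; left; rfl
  have hM1X : M - 1 ∈ X := by rw [hmemX]; right; right; omega
  have hXne : X.Nonempty := ⟨M - a + 1, hσX⟩
  have h0X : 0 ∉ X := by
    rw [hmemX]
    rintro (⟨h1, _⟩ | h1)
    · exact h0 h1
    · omega
  have hXub : ∀ x ∈ X, x ≤ M - 1 := by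
    intro x hx
    rw [hmemX] at hx
    rcases hx with ⟨h1, h2⟩ | h1
    · have := hsd x h1 (by rw [mem_Icc]; omega)
      omega
    · omega
  have hXlb : ∀ x ∈ X, M - a + 1 ≤ x := by
    intro x hx
    rw [hmemX] at hx
    rcases hx with ⟨h1, h2⟩ | h1
    · have := hmin x h1
      omega
    · omega
  have hM' : X.max' hXne = M - 1 :=
    le_antisymm (Finset.max'_le _ _ _ hXub) (Finset.le_max' _ _ hM1X)
  have hmin' : X.min' hXne = M - a + 1 :=
    le_antisymm (Finset.min'_le _ _ hσX) (Finset.le_min' _ _ _ hXlb)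
  have hdisj : Disjoint (S \ Icc a M) (insert (M - a + 1) (Icc (a - 1) (M - 1))) := by
    rw [Finset.disjoint_left]
    intro x hx hx2
    rw [mem_sdiff] at hx
    have h1 := hsd x hx.1 hx.2
    rw [mem_insert, mem_Icc] at hx2
    omega
  have hins : M - a + 1 ∉ Icc (a - 1) (M - 1) := by rw [mem_Icc]; omega
  -- sum
  have hsum1 : (S \ Icc a M).sum id + (Icc a M).sum id = S.sum id := Finset.sum_sdiff hrun
  have hsum2 : X.sum id = (S \ Icc a M).sum id
      + (insert (M - a + 1) (Icc (a - 1) (M - 1))).sum id := Finset.sum_union hdisj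
  have hsumJ : (insert (M - a + 1) (Icc (a - 1) (M - 1))).sum id
      = (M - a + 1) + (Icc (a - 1) (M - 1)).sum id := Finset.sum_insert hins
  have hshift : (Icc a M).sum id = (Icc (a - 1) (M - 1)).sum id + (M - a + 1) := by
    have h2 := sum_Icc_shift (a - 1) (M - 1) (by omega)
    have e1 : a - 1 + 1 = a := by omega
    have e2 : M - 1 + 1 = M := by omega
    rw [e1, e2] at h2
    simp only [id] at h2 ⊢
    omega
  have hsumX : X.sum id = S.sum id := by omega
  -- card
  have hcard1 : (S \ Icc a M).card = S.card - (Icc a M).card := card_sdiff_of_subset hrun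
  have hcardle : (Icc a M).card ≤ S.card := card_le_card hrun
  have hcard2 : X.card = (S \ Icc a M).card
      + (insert (M - a + 1) (Icc (a - 1) (M - 1))).card := card_union_of_disjoint hdisj
  have hcardJ : (insert (M - a + 1) (Icc (a - 1) (M - 1))).card
      = (Icc (a - 1) (M - 1)).card + 1 := card_insert_of_notMem hins
  have hcardI1 : (Icc a M).card = M + 1 - a := Nat.card_Icc a M
  have hcardI2 : (Icc (a - 1) (M - 1)).card = M - 1 + 1 - (a - 1) := Nat.card_Icc _ _
  have hcardX : X.card = S.card + 1 := by omega
  -- evaluate iota X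
  have ha''' : runStart X hXne ≤ a - 1 := by
    apply runStart_le_of_mem X hXne
    · rw [hmemX]; right; right; omega
    · rw [hM']
      intro x hx
      rw [mem_Icc] at hx
      rw [hmemX]
      right; right; omega
  have hbranchX : X.min' hXne ≤ X.max' hXne - runStart X hXne + 1 := by
    rw [hmin', hM']
    omega
  have hiotaX : iota X = (X \ insert (M - a + 1) (Icc (a - 1) (M - 1))) ∪ Icc a M := by
    unfold iota
    rw [dif_pos hXne, if_pos hbranchX, hM', hmin']
    have e1 : M - 1 - (M - a + 1) + 1 = a - 1 := by omega
    have e2 : M - 1 - (M - a + 1) + 2 = a := by omega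
    have e3 : M - 1 + 1 = M := by omega
    rw [e1, e2, e3]
  have hXdiff : X \ insert (M - a + 1) (Icc (a - 1) (M - 1)) = S \ Icc a M := by
    apply Finset.Subset.antisymm
    · intro x hx
      rw [mem_sdiff] at hx
      rcases mem_union.1 hx.1 with h1 | h1
      · exact h1
      · exact absurd h1 hx.2
    · intro x hx
      rw [mem_sdiff]
      refine ⟨mem_union_left _ hx, fun h2 => ?_⟩
      exact Finset.disjoint_left.1 hdisj hx h2
  have hiotaXS : iota X = S := by
    rw [hiotaX, hXdiff, Finset.sdiff_union_of_subset hrun]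
  -- not pentagonal
  have hpX : ∀ n, X ≠ pent n := by
    intro n hXp
    obtain ⟨c, hc1, hshp⟩ := pent_shape n
    have hXI : ∃ d, X = Icc c d ∧ (d = 2 * c - 1 ∨ d = 2 * c - 2) := by
      rcases hshp with hshp | hshp
      · exact ⟨2 * c - 1, hXp.trans hshp, Or.inl rfl⟩
      · exact ⟨2 * c - 2, hXp.trans hshp, Or.inr rfl⟩
    obtain ⟨d, hXI, hd⟩ := hXI
    rw [Finset.ext_iff] at hXI
    have e1 := hXI (M - a + 1)
    have e2 := hXI (M - 1)
    have e3 := hXI c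
    have e4 := hXI d
    simp only [mem_Icc] at e1 e2 e3 e4
    have f1 := e1.1 hσX
    have f2 := e2.1 hM1X
    have g3 : c ∈ X := e3.2 (by omega)
    have f3 := hXlb c g3
    have g4 : d ∈ X := e4.2 (by omega)
    have f4 := hXub d g4
    omega
  exact ⟨hXdef ▸ hXne, hXdef ▸ h0X, hXdef ▸ hpX, hXdef ▸ hsumX, hXdef ▸ hcardX,
    by rw [hXdef]; exact hiotaXS⟩

end PentAux
namespace PentAux

lemma pent_zero : (Icc 1 0 : Finset ℕ) = ∅ := by
  apply Finset.Icc_eq_empty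
  omega

theorem iota_spec (S : Finset ℕ) (h0 : 0 ∉ S) (hp : ∀ n, S ≠ pent n) :
    0 ∉ iota S ∧ (∀ n, iota S ≠ pent n) ∧ iota (iota S) = S ∧
      (iota S).sum id = S.sum id ∧
      ((iota S).card = S.card + 1 ∨ S.card = (iota S).card + 1) := by
  have h : S.Nonempty := by
    rw [Finset.nonempty_iff_ne_empty]
    intro e
    apply hp 0
    rw [e]
    show (∅ : Finset ℕ) = pent 0
    simp only [pent, if_neg (by omega : ¬(0:ℤ) < 0), Int.natAbs_zero, mul_zero, zero_add]
    exact pent_zero.symm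
  by_cases hc : S.min' h ≤ S.max' h - runStart S h + 1
  · obtain ⟨h1, h2, h3, h4, h5, h6⟩ := caseA S h h0 hp hc
    exact ⟨h2, h3, h6, h4, Or.inr h5⟩
  · obtain ⟨h1, h2, h3, h4, h5, h6⟩ := caseB S h h0 hp hc
    exact ⟨h2, h3, h6, h4, Or.inl h5⟩

/-- the signed weight attached to a finite set of positive integers -/
noncomputable def gg (q : ℂ) (T : Finset ℕ) : ℂ :=
  if 0 ∈ T then 0 else (-1) ^ T.card * q ^ (∑ i ∈ T, i)

lemma gg_norm_le (q : ℂ) (T : Finset ℕ) : ‖gg q T‖ ≤ ‖q‖ ^ (∑ i ∈ T, i) := by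
  unfold gg
  split
  · simp only [norm_zero]
    positivity
  · rw [norm_mul, norm_pow, norm_pow, norm_neg, norm_one, one_pow, one_mul]

lemma gg_norm_eq (q : ℂ) (T : Finset ℕ) (h0 : 0 ∉ T) : ‖gg q T‖ = ‖q‖ ^ (∑ i ∈ T, i) := by
  unfold gg
  rw [if_neg h0, norm_mul, norm_pow, norm_pow, norm_neg, norm_one, one_pow, one_mul]

lemma summable_norm_gg (q : ℂ) (hq : ‖q‖ < 1) : Summable (fun T => ‖gg q T‖) := by
  have r0 : 0 ≤ ‖q‖ := norm_nonneg q
  have hB : Summable (fun i : ℕ => ‖q‖ ^ i) := summable_geometric_of_lt_one r0 hq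
  apply summable_of_sum_le (fun T => norm_nonneg _)
  intro u
  set N := u.sup (fun T => T.sup id) with hN
  have h1 : ∑ T ∈ u, ‖gg q T‖ = ∑ T ∈ u.filter (fun T => 0 ∉ T), ‖gg q T‖ := by
    symm
    apply Finset.sum_filter_of_ne
    intro T _ hT h0T
    apply hT
    simp only [gg, if_pos h0T, norm_zero]
  have h2 : u.filter (fun T => 0 ∉ T) ⊆ (Icc 1 N).powerset := by
    intro T hT
    rw [mem_filter] at hT
    rw [mem_powerset]
    intro x hx
    rw [mem_Icc]
    constructor
    · rcases Nat.eq_zero_or_pos x with rfl | h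
      · exact absurd hx hT.2
      · omega
    · calc x ≤ T.sup id := Finset.le_sup (f := id) hx
        _ ≤ N := Finset.le_sup (f := fun T => T.sup id) hT.1
  calc ∑ T ∈ u, ‖gg q T‖
      = ∑ T ∈ u.filter (fun T => 0 ∉ T), ‖gg q T‖ := h1
    _ ≤ ∑ T ∈ u.filter (fun T => 0 ∉ T), ‖q‖ ^ (∑ i ∈ T, i) :=
        Finset.sum_le_sum (fun T _ => gg_norm_le q T)
    _ ≤ ∑ T ∈ (Icc 1 N).powerset, ‖q‖ ^ (∑ i ∈ T, i) := by
        apply Finset.sum_le_sum_of_subset_of_nonneg h2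
        intro T _ _
        positivity
    _ = ∏ i ∈ Icc 1 N, (‖q‖ ^ i + 1) := by
        rw [Finset.prod_add]
        apply Finset.sum_congr rfl
        intro t _
        rw [Finset.prod_const_one, mul_one, Finset.prod_pow_eq_pow_sum]
    _ ≤ ∏ i ∈ Icc 1 N, Real.exp (‖q‖ ^ i) := by
        apply Finset.prod_le_prod
        · intro i _; positivity
        · intro i _; exact Real.add_one_le_exp _
    _ = Real.exp (∑ i ∈ Icc 1 N, ‖q‖ ^ i) := (Real.exp_sum _ _).symm
    _ ≤ Real.exp (∑' i : ℕ, ‖q‖ ^ i) := by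
        apply Real.exp_le_exp.2
        exact Summable.sum_le_tsum _ (fun i _ => by positivity) hB

end PentAux

namespace PentAux
open Finset

lemma pent_not_zero_mem (n : ℤ) : 0 ∉ pent n := by
  unfold pent
  split
  · rw [mem_Icc]; omega
  · rw [mem_Icc]; omega

lemma gauss (a b : ℕ) (h : a ≤ b + 1) :
    2 * ((∑ x ∈ Icc a b, x : ℕ) : ℤ) = ((b : ℤ) + 1) * b - (a : ℤ) * ((a : ℤ) - 1) := by
  have hIcc : Icc a b = range (b + 1) \ range a := by
    ext x
    simp only [mem_Icc, mem_sdiff, mem_range]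
    omega
  have hsd := Finset.sum_sdiff (f := fun x => x) (Finset.range_subset_range.2 h)
  have G1 := Finset.sum_range_id_mul_two (b + 1)
  have G2 := Finset.sum_range_id_mul_two a
  simp only [Nat.add_sub_cancel] at G1
  rw [hIcc]
  have c1 : ((∑ x ∈ range (b + 1) \ range a, x : ℕ) : ℤ) + (∑ x ∈ range a, x : ℕ) =
      ((∑ x ∈ range (b + 1), x : ℕ) : ℤ) := by exact_mod_cast congrArg (Nat.cast (R := ℤ)) hsd
  have c2 : ((∑ x ∈ range (b + 1), x : ℕ) : ℤ) * 2 = ((b : ℤ) + 1) * b := by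
    exact_mod_cast congrArg (Nat.cast (R := ℤ)) G1
  have c3 : ((∑ x ∈ range a, x : ℕ) : ℤ) * 2 = (a : ℤ) * ((a : ℤ) - 1) := by
    rcases Nat.eq_zero_or_pos a with rfl | ha
    · simp
    · have h2 : (a * (a - 1) : ℕ) = (∑ x ∈ range a, x) * 2 := G2.symm
      have h3 : ((a * (a - 1) : ℕ) : ℤ) = (a : ℤ) * ((a : ℤ) - 1) := by
        push_cast [Nat.cast_sub ha]
        ring
      rw [← h3]
      exact_mod_cast congrArg (Nat.cast (R := ℤ)) G2
  linarith [c1, c2, c3]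

lemma pent_sum (n : ℤ) : 2 * ((∑ x ∈ pent n, x : ℕ) : ℤ) = 3 * n ^ 2 - n := by
  unfold pent
  split
  · rename_i hn
    have hk : 1 ≤ n.toNat := by omega
    have hg := gauss n.toNat (2 * n.toNat - 1) (by omega)
    have e1 : ((2 * n.toNat - 1 : ℕ) : ℤ) = 2 * (n : ℤ) - 1 := by omega
    have e2 : ((n.toNat : ℕ) : ℤ) = n := by omega
    rw [e1, e2] at hg
    linear_combination hg
  · rename_i hn
    have hg := gauss (n.natAbs + 1) (2 * n.natAbs) (by omega)
    have e1 : ((2 * n.natAbs : ℕ) : ℤ) = -2 * (n : ℤ) := by omega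
    have e2 : ((n.natAbs + 1 : ℕ) : ℤ) = -(n : ℤ) + 1 := by omega
    rw [e1, e2] at hg
    linear_combination hg

lemma tsum_involution_zero {α : Type*} (f : α → ℂ) (κ : α → α) (hκ : ∀ x, κ (κ x) = x)
    (hf : ∀ x, f (κ x) = - f x) : ∑' x, f x = 0 := by
  have h0 : ∑' x, f ((Function.Involutive.toPerm κ hκ) x) = ∑' x, f x := Equiv.tsum_eq _ f
  change ∑' x, f (κ x) = ∑' x, f x at h0
  have h1 : ∑' x, f x = - ∑' x, f x := by
    conv_lhs => rw [← h0]
    rw [tsum_congr (fun x => hf x), tsum_neg]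
  have h2 : (∑' x, f x) + (∑' x, f x) = 0 := by
    nth_rewrite 1 [h1]
    ring
  exact add_self_eq_zero.1 h2

end PentAux


open Complex Real PentAux Finset

/-- For `z` in the upper half plane,
`|∏_{n=1}^∞ (1 - e^{2πinz})| ≤ Σ_{n ∈ ℤ} e^{-π Im(z)(3n²-n)}`. -/
theorem statement2 : ∀ z : ℂ, 0 < z.im →
    ‖(∏' n : ℕ, (1 - Complex.exp (2 * (Real.pi : ℂ) * Complex.I * ((n : ℂ) + 1) * z)))‖
      ≤ ∑' n : ℤ, Real.exp (-Real.pi * z.im * (3 * (n : ℝ) ^ 2 - (n : ℝ))) := by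
  intro z hz
  set t := z.im with ht
  set q := Complex.exp (2 * (Real.pi : ℂ) * Complex.I * z) with hqdef
  have hπt : 0 < Real.pi * t := mul_pos Real.pi_pos hz
  have hqnorm : ‖q‖ = Real.exp (-(2 * Real.pi * t)) := by
    rw [hqdef, Complex.norm_exp]
    congr 1
    simp only [Complex.mul_re, Complex.mul_im, Complex.I_re, Complex.I_im, Complex.ofReal_re,
      Complex.ofReal_im, Complex.re_ofNat, Complex.im_ofNat]
    ring
  have hq1 : ‖q‖ < 1 := by
    rw [hqnorm]
    apply Real.exp_lt_one_iff.2
    nlinarith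
  -- summability of gg
  have hsum_norm := summable_norm_gg q hq1
  have hsum_g : Summable (gg q) := Summable.of_norm hsum_norm
  -- the product expansion
  have himg_inj : Function.Injective (fun S : Finset ℕ => S.image (· + 1)) :=
    Finset.image_injective (fun a b hab => by omega)
  have hgp_eq : ∀ S : Finset ℕ, (∏ i ∈ S, (-(q ^ (i + 1)))) = gg q (S.image (· + 1)) := by
    intro S
    have h0i : 0 ∉ S.image (· + 1) := by simp
    rw [gg, if_neg h0i, Finset.card_image_of_injective _ (fun a b hab => by omega),
      Finset.sum_image (by intro a _ b _ hab; simp only at hab; omega)]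
    rw [show (fun i => -(q ^ (i + 1))) = fun i => (-1) * q ^ (i + 1) from funext fun i => by ring]
    rw [Finset.prod_mul_distrib, Finset.prod_const, Finset.prod_pow_eq_pow_sum]
  have hsum_gp : Summable (fun S : Finset ℕ => ∏ i ∈ S, (-(q ^ (i + 1)))) := by
    apply Summable.of_norm
    have h1 : Summable (fun S : Finset ℕ => ‖gg q (S.image (· + 1))‖) :=
      hsum_norm.comp_injective himg_inj
    exact h1.congr (fun S => by rw [hgp_eq S])
  have hprod_eq_sum : ∀ s : Finset ℕ,
      ∏ n ∈ s, (1 - q ^ (n + 1)) = ∑ T ∈ s.powerset, ∏ i ∈ T, (-(q ^ (i + 1))) := by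
    intro s
    rw [Finset.prod_congr rfl (fun n _ => show 1 - q ^ (n+1) = (-(q ^ (n+1))) + 1 by ring),
      Finset.prod_add]
    apply Finset.sum_congr rfl
    intro u _
    rw [Finset.prod_const_one, mul_one]
  have hpow_tendsto : Filter.Tendsto (fun s : Finset ℕ => s.powerset)
      Filter.atTop Filter.atTop :=
    Filter.tendsto_atTop_finset_of_monotone (fun s u hsu => Finset.powerset_mono.2 hsu)
      (fun T => ⟨T, Finset.mem_powerset_self T⟩)
  have hHasProd : HasProd (fun n : ℕ => 1 - q ^ (n + 1))
      (∑' T, ∏ i ∈ T, (-(q ^ (i + 1)))) := by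
    have h1 : HasSum (fun S : Finset ℕ => ∏ i ∈ S, (-(q ^ (i + 1)))) _ := hsum_gp.hasSum
    have h2 : Filter.Tendsto
        ((fun u : Finset (Finset ℕ) => ∑ T ∈ u, ∏ i ∈ T, (-(q ^ (i + 1)))) ∘
          (fun s : Finset ℕ => s.powerset)) Filter.atTop
        (nhds (∑' T, ∏ i ∈ T, (-(q ^ (i + 1))))) := h1.comp hpow_tendsto
    exact (h2.congr (fun s => (hprod_eq_sum s).symm) : _)
  have htprod : (∏' n : ℕ, (1 - q ^ (n + 1))) = ∑' T, ∏ i ∈ T, (-(q ^ (i + 1))) :=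
    hHasProd.tprod_eq
  -- reindex to gg over all finsets
  have htsum_gp_gg : (∑' T : Finset ℕ, ∏ i ∈ T, (-(q ^ (i + 1)))) = ∑' T, gg q T := by
    rw [tsum_congr hgp_eq]
    apply Function.Injective.tsum_eq himg_inj
    intro T hT
    have h0T : 0 ∉ T := by
      intro h0T
      apply hT
      simp [gg, if_pos h0T]
    refine ⟨T.image (· - 1), ?_⟩
    ext y
    simp only [Finset.mem_image]
    constructor
    · rintro ⟨b, ⟨c, hc, rfl⟩, rfl⟩
      have h1 : 1 ≤ c := by
        rcases Nat.eq_zero_or_pos c with rfl | h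
        · exact absurd hc h0T
        · omega
      have h2 : c - 1 + 1 = c := by omega
      rwa [h2]
    · intro hy
      have h1 : 1 ≤ y := by
        rcases Nat.eq_zero_or_pos y with rfl | h
        · exact absurd hy h0T
        · omega
      exact ⟨y - 1, ⟨y, hy, rfl⟩, by omega⟩
  -- split the sum over pentagonal / non-pentagonal finsets
  have hsplit : (∑' (x : ↥(Set.range pent)), gg q ↑x) + ∑' (x : ↥(Set.range pent)ᶜ), gg q ↑x
      = ∑' T, gg q T := hsum_g.tsum_subtype_add_tsum_subtype_compl (Set.range pent)
  -- the non-pentagonal part vanishes by Franklin's involution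
  have hcompl : (∑' (x : ↥(Set.range pent)ᶜ), gg q ↑x) = 0 := by
    have hpT : ∀ x : ↥(Set.range pent)ᶜ, ∀ n, (x : Finset ℕ) ≠ pent n := by
      intro x n he
      exact x.2 ⟨n, he.symm⟩
    set κ : ↥(Set.range pent)ᶜ → ↥(Set.range pent)ᶜ := fun T =>
      if h : 0 ∈ (T : Finset ℕ) then T else
        ⟨iota T, fun hmem => by
          obtain ⟨n, hn⟩ := hmem
          exact (iota_spec T h (hpT T)).2.1 n hn.symm⟩ with hκ
    have hκκ : ∀ T, κ (κ T) = T := by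
      intro T
      by_cases h : 0 ∈ (T : Finset ℕ)
      · simp only [hκ, dif_pos h]
      · have spec := iota_spec T h (hpT T)
        simp only [hκ, dif_neg h]
        rw [dif_neg spec.1]
        exact Subtype.ext spec.2.2.1
    have hκf : ∀ T, gg q ((κ T : Finset ℕ)) = - gg q T := by
      intro T
      by_cases h : 0 ∈ (T : Finset ℕ)
      · simp only [hκ, dif_pos h]
        rw [gg, if_pos h]
        simp
      · have spec := iota_spec T h (hpT T)
        simp only [hκ, dif_neg h]
        rw [gg, gg, if_neg spec.1, if_neg h]
        have hsumeq : (∑ i ∈ iota (T : Finset ℕ), i) = ∑ i ∈ (T : Finset ℕ), i :=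
          spec.2.2.2.1
        rw [hsumeq]
        rcases spec.2.2.2.2 with hcard | hcard
        · rw [hcard, pow_succ]
          ring
        · rw [hcard, pow_succ]
          ring
    exact tsum_involution_zero _ κ hκκ hκf
  -- the pentagonal part
  have hrange : (∑' (x : ↥(Set.range pent)), gg q ↑x) = ∑' n : ℤ, gg q (pent n) := by
    rw [← Equiv.tsum_eq (Equiv.ofInjective pent pent_injective)
      (fun x : ↥(Set.range pent) => gg q ↑x)]
    apply tsum_congr
    intro n
    simp [Equiv.ofInjective_apply]
  have hP : (∏' n : ℕ, (1 - q ^ (n + 1))) = ∑' n : ℤ, gg q (pent n) := by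
    rw [htprod, htsum_gp_gg, ← hsplit, hcompl, add_zero, hrange]
  -- the term norms
  have hterm : ∀ n : ℤ, ‖gg q (pent n)‖ = Real.exp (-Real.pi * t * (3 * (n:ℝ) ^ 2 - n)) := by
    intro n
    rw [gg_norm_eq q _ (pent_not_zero_mem n), hqnorm, ← Real.exp_nat_mul]
    congr 1
    have hw := pent_sum n
    have hwR : 2 * ((∑ i ∈ pent n, i : ℕ) : ℝ) = 3 * (n:ℝ) ^ 2 - n := by exact_mod_cast hw
    linear_combination (-(Real.pi * t)) * hwR
  -- summability of the RHS
  have hrsum : Summable (fun n : ℤ => Real.exp (-Real.pi * t * (3 * (n:ℝ) ^ 2 - n))) := by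
    have hρ0 : 0 ≤ Real.exp (-(Real.pi * t)) := (Real.exp_pos _).le
    have hρ1 : Real.exp (-(Real.pi * t)) < 1 := Real.exp_lt_one_iff.2 (by linarith)
    have hgeo : Summable (fun n : ℕ => Real.exp (-(Real.pi * t)) ^ n) :=
      summable_geometric_of_lt_one hρ0 hρ1
    have hcomp : Summable (fun n : ℤ => Real.exp (-(Real.pi * t)) ^ n.natAbs) := by
      apply Summable.of_nat_of_neg
      · exact hgeo.congr (fun n => by simp)
      · exact hgeo.congr (fun n => by simp)
    apply Summable.of_nonneg_of_le (fun n => (Real.exp_pos _).le) ?_ hcomp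
    intro n
    rw [← Real.exp_nat_mul]
    apply Real.exp_le_exp.2
    have hZ : (n.natAbs : ℤ) ≤ 3 * n ^ 2 - n := by
      have h1 : n = 0 ∨ 1 ≤ n ∨ n ≤ -1 := by omega
      rcases h1 with rfl | h1 | h1
      · simp
      · have h2 : (n.natAbs : ℤ) = n := by omega
        rw [h2]
        nlinarith [mul_nonneg (by omega : (0:ℤ) ≤ n) (by omega : (0:ℤ) ≤ n - 1)]
      · have h2 : (n.natAbs : ℤ) = -n := by omega
        rw [h2]
        nlinarith [sq_nonneg n]
    have hZ' : |n| ≤ 3 * n ^ 2 - n := by rwa [Int.abs_eq_natAbs]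
    have hZR : (n.natAbs : ℝ) ≤ 3 * (n:ℝ) ^ 2 - n := by
      rw [Nat.cast_natAbs]
      exact_mod_cast hZ'
    nlinarith [mul_le_mul_of_nonneg_left hZR hπt.le]
  -- assemble
  have hfun : (fun n : ℕ => 1 - Complex.exp (2 * (Real.pi : ℂ) * Complex.I * ((n : ℂ) + 1) * z))
      = fun n : ℕ => 1 - q ^ (n + 1) := by
    funext n
    congr 1
    rw [hqdef, ← Complex.exp_nat_mul]
    congr 1
    push_cast
    ring
  rw [hfun]
  have hnorm_le : ‖∑' n : ℤ, gg q (pent n)‖ ≤ ∑' n : ℤ, ‖gg q (pent n)‖ :=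
    norm_tsum_le_tsum_norm (hrsum.congr (fun n => (hterm n).symm))
  calc ‖(∏' n : ℕ, (1 - q ^ (n + 1)))‖
      = ‖∑' n : ℤ, gg q (pent n)‖ := by rw [hP]
    _ ≤ ∑' n : ℤ, ‖gg q (pent n)‖ := hnorm_le
    _ = ∑' n : ℤ, Real.exp (-Real.pi * t * (3 * (n:ℝ) ^ 2 - n)) := tsum_congr hterm
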